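/- arXiv:2112.10891 — 2 statements merged into one kernel-verified Lean document; each statement's English description precedes it below -/
import Mathlib

section
/- Let S ⊆ ℝᵐ contain the origin and let M : S ⇉ ℝⁿ be compact-valued, nonempty-valued near 0, locally bounded at 0, and both inner and outer semicontinuous at 0. Let J : ℝⁿ × ℝᵐ → ℝ be continuous at (ξ',0) for all ξ' ∈ M(0). Then the value function h(θ) := min_{ξ ∈ M(θ)} J(ξ,θ) is continuous at 0, and the argmin map θ ↦ argmin_{ξ∈M(θ)} J(ξ,θ) is outer semicontinuous at 0, i.e., limsup_{θ→0} argmin_{ξ∈M(θ)} J(ξ,θ) ⊆ argmin_{ξ∈M(0)} J(ξ,0). -/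
open Filter Topology

/-- Outer semicontinuity at a point, relative to `S` (sequential definition). -/
def OuterSemicontinuousAt {m n : ℕ} (M : (Fin m → ℝ) → Set (Fin n → ℝ))
    (S : Set (Fin m → ℝ)) (x : Fin m → ℝ) : Prop :=
  ∀ (xs : ℕ → Fin m → ℝ) (ys : ℕ → Fin n → ℝ) (y : Fin n → ℝ),
    (∀ i, xs i ∈ S) → Tendsto xs atTop (𝓝 x) →
    (∀ i, ys i ∈ M (xs i)) → Tendsto ys atTop (𝓝 y) → y ∈ M x

/-- Local boundedness at a point, relative to `S`. -/
def LocallyBoundedAt {m n : ℕ} (M : (Fin m → ℝ) → Set (Fin n → ℝ))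
    (S : Set (Fin m → ℝ)) (x : Fin m → ℝ) : Prop :=
  ∃ ε > 0, Bornology.IsBounded (⋃ x' ∈ S ∩ Metric.closedBall x ε, M x')

/-- Inner limit of `M` as `θ → θ₀` within `S`. -/
def InnerLimit {m n : ℕ} (M : (Fin m → ℝ) → Set (Fin n → ℝ))
    (S : Set (Fin m → ℝ)) (θ₀ : Fin m → ℝ) : Set (Fin n → ℝ) :=
  {y | ∀ θs : ℕ → Fin m → ℝ, (∀ i, θs i ∈ S) → Tendsto θs atTop (𝓝 θ₀) →
    ∃ ys : ℕ → Fin n → ℝ, (∀ᶠ i in atTop, ys i ∈ M (θs i)) ∧ Tendsto ys atTop (𝓝 y)}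

/-- The set of minimizers of `ξ ↦ J ξ θ` over `M θ`. -/
def ArgminSet {m n : ℕ} (M : (Fin m → ℝ) → Set (Fin n → ℝ))
    (J : (Fin n → ℝ) → (Fin m → ℝ) → ℝ) (θ : Fin m → ℝ) : Set (Fin n → ℝ) :=
  {ξ | ξ ∈ M θ ∧ ∀ ξ' ∈ M θ, J ξ θ ≤ J ξ' θ}

/-- Berge: for `M` compact-valued, nonempty-valued near `0`, locally bounded and
both inner and outer semicontinuous at `0`, and `J` continuous at `(ξ',0)` for all `ξ' ∈ M 0`,
the value function `h(θ) = min_{ξ∈M(θ)} J(ξ,θ)` is continuous at `0` and the argmin map is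
outer semicontinuous at `0`. -/
theorem stmt4 {m n : ℕ} (S : Set (Fin m → ℝ)) (h0S : (0 : Fin m → ℝ) ∈ S)
    (M : (Fin m → ℝ) → Set (Fin n → ℝ))
    (hcpt : ∀ θ ∈ S, IsCompact (M θ))
    (hne : ∃ ε > 0, ∀ θ ∈ S ∩ Metric.closedBall 0 ε, (M θ).Nonempty)
    (hlb : LocallyBoundedAt M S 0)
    (hisc : M 0 ⊆ InnerLimit M S 0)
    (hosc : OuterSemicontinuousAt M S 0)
    (J : (Fin n → ℝ) → (Fin m → ℝ) → ℝ)
    (hJ : ∀ ξ' ∈ M 0,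
      ContinuousAt (fun p : (Fin n → ℝ) × (Fin m → ℝ) => J p.1 p.2) (ξ', 0))
    (h : (Fin m → ℝ) → ℝ)
    (hdef : ∀ θ ∈ S, h θ = sInf ((fun ξ => J ξ θ) '' M θ)) :
    Tendsto h (𝓝[S] (0 : Fin m → ℝ)) (𝓝 (h 0)) ∧
    (∀ (θs : ℕ → Fin m → ℝ) (ys : ℕ → Fin n → ℝ) (y : Fin n → ℝ),
      (∀ i, θs i ∈ S) → Tendsto θs atTop (𝓝 (0 : Fin m → ℝ)) →
      (∀ i, ys i ∈ ArgminSet M J (θs i)) → Tendsto ys atTop (𝓝 y) →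
      y ∈ ArgminSet M J 0) := by
  classical
  obtain ⟨ε₁, hε₁, hne'⟩ := hne
  have hM0cpt : IsCompact (M 0) := hcpt 0 h0S
  have hM0ne : (M 0).Nonempty := hne' 0 ⟨h0S, Metric.mem_closedBall_self hε₁.le⟩
  have hcont0 : ContinuousOn (fun ξ => J ξ 0) (M 0) := by
    intro ξ' hξ'
    have : Tendsto (fun ξ : Fin n → ℝ => J ξ 0) (𝓝 ξ') (𝓝 (J ξ' 0)) :=
      (hJ ξ' hξ').tendsto.comp (tendsto_id.prodMk_nhds tendsto_const_nhds)
    exact this.mono_left nhdsWithin_le_nhds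
  obtain ⟨ξ₀, hξ₀mem, hξ₀min⟩ := hM0cpt.exists_isMinOn hM0ne hcont0
  have hh0 : h 0 = J ξ₀ 0 := by
    rw [hdef 0 h0S]
    exact IsLeast.csInf_eq ⟨Set.mem_image_of_mem _ hξ₀mem, by
      rintro _ ⟨ξ', hξ', rfl⟩; exact hξ₀min hξ'⟩
  have hh0le : ∀ ξ' ∈ M 0, h 0 ≤ J ξ' 0 := fun ξ' hξ' => hh0 ▸ hξ₀min hξ'
  -- key uniform lower bound
  have key : ∀ θs : ℕ → Fin m → ℝ, (∀ i, θs i ∈ S) → Tendsto θs atTop (𝓝 0) →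
      ∀ ε > (0:ℝ), ∀ᶠ i in atTop, ∀ ξ ∈ M (θs i), h 0 - ε < J ξ (θs i) := by
    intro θs hθS hθ0 ε hε
    by_contra hcon
    rw [Filter.not_eventually] at hcon
    have hcon' : ∃ᶠ i in atTop, ∃ ξ ∈ M (θs i), J ξ (θs i) ≤ h 0 - ε := by
      refine hcon.mono fun i hi => ?_
      push_neg at hi
      obtain ⟨ξ, hξ, hle⟩ := hi
      exact ⟨ξ, hξ, hle⟩
    obtain ⟨φ, hφ, hφP⟩ := Filter.extraction_of_frequently_atTop hcon'
    choose ξs hξmem hξle using hφP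
    obtain ⟨ε₀, hε₀, hB⟩ := hlb
    have hθφ : Tendsto (fun k => θs (φ k)) atTop (𝓝 0) := hθ0.comp hφ.tendsto_atTop
    obtain ⟨N, hN⟩ := Metric.tendsto_atTop.mp hθφ ε₀ hε₀
    have hmemB : ∀ k, ξs (k + N) ∈ ⋃ x' ∈ S ∩ Metric.closedBall (0 : Fin m → ℝ) ε₀, M x' := by
      intro k
      exact Set.mem_biUnion ⟨hθS _, Metric.mem_closedBall.mpr (hN _ (Nat.le_add_left N k)).le⟩
        (hξmem _)
    obtain ⟨a, -, ψ, hψ, hψtend⟩ := tendsto_subseq_of_bounded hB hmemB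
    have hidx : ∀ j, j ≤ φ (ψ j + N) := fun j =>
      le_trans (le_trans hψ.le_apply (Nat.le_add_right _ N)) hφ.le_apply
    have hxs : Tendsto (fun j => θs (φ (ψ j + N))) atTop (𝓝 0) :=
      hθ0.comp (tendsto_atTop_mono hidx tendsto_id)
    have haM : a ∈ M 0 :=
      hosc (fun j => θs (φ (ψ j + N))) (fun j => ξs (ψ j + N)) a
        (fun j => hθS _) hxs (fun j => hξmem _) hψtend
    have hJt : Tendsto (fun j => J (ξs (ψ j + N)) (θs (φ (ψ j + N)))) atTop (𝓝 (J a 0)) :=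
      (hJ a haM).tendsto.comp (hψtend.prodMk_nhds hxs)
    have hle : J a 0 ≤ h 0 - ε :=
      le_of_tendsto hJt (Filter.Eventually.of_forall fun j => hξle _)
    linarith [hh0le a haM]
  -- sequential convergence of the value function
  have seqconv : ∀ θs : ℕ → Fin m → ℝ, (∀ i, θs i ∈ S) → Tendsto θs atTop (𝓝 0) →
      Tendsto (fun i => h (θs i)) atTop (𝓝 (h 0)) := by
    intro θs hθS hθ0
    have hev_ne : ∀ᶠ i in atTop, (M (θs i)).Nonempty := by
      obtain ⟨N, hN⟩ := Metric.tendsto_atTop.mp hθ0 ε₁ hε₁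
      exact Filter.eventually_atTop.mpr ⟨N, fun i hi =>
        hne' _ ⟨hθS i, Metric.mem_closedBall.mpr (hN i hi).le⟩⟩
    rw [Metric.tendsto_nhds]
    intro ε hε
    have hkey := key θs hθS hθ0 (ε/2) (by linarith)
    obtain ⟨ys, hysmem, hystend⟩ := hisc hξ₀mem θs hθS hθ0
    have hJys : Tendsto (fun i => J (ys i) (θs i)) atTop (𝓝 (h 0)) := by
      rw [hh0]
      exact (hJ ξ₀ hξ₀mem).tendsto.comp (hystend.prodMk_nhds hθ0)
    have hupper : ∀ᶠ i in atTop, J (ys i) (θs i) < h 0 + ε/2 :=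
      hJys.eventually_lt_const (by linarith)
    filter_upwards [hkey, hev_ne, hysmem, hupper] with i h1 h2 h3 h4
    have hbdd : BddBelow ((fun ξ => J ξ (θs i)) '' M (θs i)) := by
      refine ⟨h 0 - ε/2, ?_⟩
      rintro _ ⟨ξ, hξ, rfl⟩
      exact (h1 ξ hξ).le
    have hlow : h 0 - ε/2 ≤ h (θs i) := by
      rw [hdef _ (hθS i)]
      refine le_csInf (h2.image _) ?_
      rintro _ ⟨ξ, hξ, rfl⟩
      exact (h1 ξ hξ).le
    have hup : h (θs i) ≤ J (ys i) (θs i) := by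
      rw [hdef _ (hθS i)]
      exact csInf_le hbdd (Set.mem_image_of_mem _ h3)
    rw [Real.dist_eq, abs_lt]
    constructor <;> linarith
  constructor
  · rw [tendsto_iff_seq_tendsto]
    intro xs hxs
    rw [tendsto_nhdsWithin_iff] at hxs
    obtain ⟨hxs0, hxsS⟩ := hxs
    set θs : ℕ → Fin m → ℝ := fun i => if xs i ∈ S then xs i else 0 with hθsdef
    have hθS : ∀ i, θs i ∈ S := fun i => by
      by_cases hx : xs i ∈ S <;> simp [θs, hx, h0S]
    have heq : ∀ᶠ i in atTop, θs i = xs i := hxsS.mono fun i hi => by simp [θs, hi]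
    have hθ0 : Tendsto θs atTop (𝓝 0) := hxs0.congr' (heq.mono fun i hi => hi.symm)
    exact (seqconv θs hθS hθ0).congr' (heq.mono fun i hi => by simp [Function.comp, hi])
  · intro θs ys y hθS hθ0 hymem hytend
    have hyM0 : y ∈ M 0 := hosc θs ys y hθS hθ0 (fun i => (hymem i).1) hytend
    have hval : ∀ i, h (θs i) = J (ys i) (θs i) := fun i => by
      rw [hdef _ (hθS i)]
      exact IsLeast.csInf_eq ⟨Set.mem_image_of_mem _ (hymem i).1, by
        rintro _ ⟨ξ', hξ', rfl⟩; exact (hymem i).2 ξ' hξ'⟩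
    have h1 : Tendsto (fun i => J (ys i) (θs i)) atTop (𝓝 (h 0)) :=
      (seqconv θs hθS hθ0).congr fun i => hval i
    have h2 : Tendsto (fun i => J (ys i) (θs i)) atTop (𝓝 (J y 0)) :=
      (hJ y hyM0).tendsto.comp (hytend.prodMk_nhds hθ0)
    have heq : J y 0 = h 0 := tendsto_nhds_unique h2 h1
    exact ⟨hyM0, fun ξ' hξ' => by rw [heq]; exact hh0le ξ' hξ'⟩
end

section
/- Let {xᵢ} be a sequence of optimal points, i.e., xᵢ ∈ argmin_{ξ ∈ M(θᵢ)} J(ξ) where θᵢ → 0, M : S ⇉ ℝⁿ is compact-valued, locally bounded, inner and outer semicontinuous at 0 with M(0) nonempty, and J : ℝⁿ → ℝ is continuous. If xᵢ → x, then x ∈ argmin_{ξ ∈ M(0)} J(ξ). -/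
open Filter Topology

/-- limits of minimizers over `M(θᵢ)`, `θᵢ → 0`, are minimizers over `M(0)`,
when `M` is compact-valued, locally bounded, inner and outer semicontinuous at `0` with
`M(0)` nonempty and `J` continuous. -/
theorem stmt18 {m n : ℕ} (S : Set (Fin m → ℝ)) (h0S : (0 : Fin m → ℝ) ∈ S)
    (M : (Fin m → ℝ) → Set (Fin n → ℝ))
    (hcpt : ∀ θ ∈ S, IsCompact (M θ)) (hne : (M 0).Nonempty)
    (hlb : LocallyBoundedAt M S 0)
    (hisc : M 0 ⊆ InnerLimit M S 0)
    (hosc : OuterSemicontinuousAt M S 0)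
    (J : (Fin n → ℝ) → ℝ) (hJ : Continuous J)
    (θs : ℕ → Fin m → ℝ) (hθS : ∀ i, θs i ∈ S)
    (hθ0 : Tendsto θs atTop (𝓝 (0 : Fin m → ℝ)))
    (xs : ℕ → Fin n → ℝ)
    (hxs : ∀ i, xs i ∈ M (θs i) ∧ ∀ ξ ∈ M (θs i), J (xs i) ≤ J ξ)
    (x : Fin n → ℝ) (hx : Tendsto xs atTop (𝓝 x)) :
    x ∈ M 0 ∧ ∀ ξ ∈ M 0, J x ≤ J ξ := by
  constructor
  · exact hosc θs xs x hθS hθ0 (fun i => (hxs i).1) hx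
  · intro ξ hξ
    obtain ⟨ys, hysM, hysT⟩ := hisc hξ θs hθS hθ0
    refine le_of_tendsto_of_tendsto ((hJ.continuousAt).tendsto.comp hx)
      ((hJ.continuousAt).tendsto.comp hysT) ?_
    filter_upwards [hysM] with i hi
    exact (hxs i).2 _ hi
end
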